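/- Let δ, δ' > 0, α, α' ∈ (0,1], p, p' ∈ (0,1). For λ, u, v ∈ ℝ define the complex number 2π·h_{δ,α,p}(λ;u,v) = −exp(−δ(p^α + 1)·[(1 − e^{iu})^α + (1 − e^{iv})^α])·(2cos λ + 1) + exp(−δ(p^α + 1)·(1 − e^{i(u+v)})^α) + exp(−δ·[p^α(1 − e^{iv})^α + (1 − e^{iv}(1 − p + p·e^{iu}))^α + (1 − e^{iu})^α])·e^{−iλ} + exp(−δ·[p^α(1 − e^{iu})^α + (1 − e^{iu}(1 − p + p·e^{iv}))^α + (1 − e^{iv})^α])·e^{iλ}, where z^α denotes the principal complex power exp(α·Log z) with Log the principal logarithm. If h_{δ,α,p}(λ;u,v) = h_{δ',α',p'}(λ;u,v) for all λ, u, v ∈ ℝ, then δ = δ', α = α', and p = p'. -/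

import Mathlib

open Real

/-- The generalized spectrum of the integer-valued MA(1) model with binomial
thinning parameter `p` and discrete stable innovations with scale `δ` and
exponent `α`.  Complex powers `z ^ (α : ℂ)` are principal powers. -/
noncomputable def inmaSpec (δ α p : ℝ) (lam u v : ℝ) : ℂ :=
  (1 / (2 * Real.pi)) *
    ( -Complex.exp (-(δ : ℂ) * (((p ^ α : ℝ) : ℂ) + 1) *
          ((1 - Complex.exp ((u : ℂ) * Complex.I)) ^ (α : ℂ) +
           (1 - Complex.exp ((v : ℂ) * Complex.I)) ^ (α : ℂ))) *
        ((2 * Real.cos lam + 1 : ℝ) : ℂ)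
      + Complex.exp (-(δ : ℂ) * (((p ^ α : ℝ) : ℂ) + 1) *
          (1 - Complex.exp (((u + v : ℝ) : ℂ) * Complex.I)) ^ (α : ℂ))
      + Complex.exp (-(δ : ℂ) *
          (((p ^ α : ℝ) : ℂ) * (1 - Complex.exp ((v : ℂ) * Complex.I)) ^ (α : ℂ) +
           (1 - Complex.exp ((v : ℂ) * Complex.I) *
              (1 - (p : ℂ) + (p : ℂ) * Complex.exp ((u : ℂ) * Complex.I))) ^ (α : ℂ) +
           (1 - Complex.exp ((u : ℂ) * Complex.I)) ^ (α : ℂ))) *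
          Complex.exp (-(lam : ℂ) * Complex.I)
      + Complex.exp (-(δ : ℂ) *
          (((p ^ α : ℝ) : ℂ) * (1 - Complex.exp ((u : ℂ) * Complex.I)) ^ (α : ℂ) +
           (1 - Complex.exp ((u : ℂ) * Complex.I) *
              (1 - (p : ℂ) + (p : ℂ) * Complex.exp ((v : ℂ) * Complex.I))) ^ (α : ℂ) +
           (1 - Complex.exp ((v : ℂ) * Complex.I)) ^ (α : ℂ))) *
          Complex.exp ((lam : ℂ) * Complex.I) )

section InmaAux

open Complex Set

noncomputable def myG (α u : ℝ) : ℝ :=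
  (2 * Real.sin (u/2)) ^ α * Real.cos (α * ((π - u)/2))

noncomputable def myS (α u : ℝ) : ℝ :=
  (2 * Real.sin (u/2)) ^ α * Real.sin (α * ((π - u)/2))

noncomputable def myQ (α p : ℝ) : ℝ := p ^ α + (1 - p) ^ α

lemma cpow_polar (r θ a : ℝ) (hr : 0 < r) (hθ : θ ∈ Set.Ioc (-π) π) :
    ((r : ℂ) * Complex.exp ((θ : ℂ) * Complex.I)) ^ (a : ℂ)
      = ((r ^ a : ℝ) : ℂ) * Complex.exp (((a * θ : ℝ) : ℂ) * Complex.I) := by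
  have hz : ((r : ℂ) * Complex.exp ((θ : ℂ) * Complex.I)) ≠ 0 := by
    apply mul_ne_zero
    · exact_mod_cast hr.ne'
    · exact Complex.exp_ne_zero _
  have habs : ‖(r : ℂ) * Complex.exp ((θ : ℂ) * Complex.I)‖ = r := by
    rw [norm_mul, Complex.norm_exp]
    simp [abs_of_pos hr]
  have harg : Complex.arg ((r : ℂ) * Complex.exp ((θ : ℂ) * Complex.I)) = θ := by
    rw [Complex.exp_mul_I]
    exact Complex.arg_mul_cos_add_sin_mul_I hr hθ
  have hlog : Complex.log ((r : ℂ) * Complex.exp ((θ : ℂ) * Complex.I))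
      = (Real.log r : ℂ) + (θ : ℂ) * Complex.I := by
    rw [Complex.log, habs, harg]
  rw [Complex.cpow_def_of_ne_zero hz, hlog]
  rw [show ((Real.log r : ℂ) + (θ:ℂ)*Complex.I) * (a:ℂ)
      = ((a * Real.log r : ℝ) : ℂ) + ((a*θ : ℝ):ℂ) * Complex.I by push_cast; ring]
  rw [Complex.exp_add, Real.rpow_def_of_pos hr, ← Complex.ofReal_exp]
  norm_num [mul_comm]

lemma one_sub_exp (u : ℝ) :
    (1 : ℂ) - Complex.exp ((u : ℂ) * Complex.I)
      = ((2 * Real.sin (u/2) : ℝ) : ℂ) * Complex.exp (((-((π - u)/2) : ℝ) : ℂ) * Complex.I) := by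
  have h1 : Real.cos (-((π - u)/2)) = Real.sin (u/2) := by
    rw [Real.cos_neg, show (π - u)/2 = π/2 - u/2 by ring, Real.cos_pi_div_two_sub]
  have h2 : Real.sin (-((π - u)/2)) = -Real.cos (u/2) := by
    rw [Real.sin_neg, show (π - u)/2 = π/2 - u/2 by ring, Real.sin_pi_div_two_sub]
  have h3 : Real.cos u = 1 - 2 * Real.sin (u/2)^2 := by
    have h5 : Real.cos u = 2 * Real.cos (u/2)^2 - 1 := by
      rw [← Real.cos_two_mul]; ring_nf
    nlinarith [Real.sin_sq_add_cos_sq (u/2)]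
  have h4 : Real.sin u = 2 * Real.sin (u/2) * Real.cos (u/2) := by
    rw [show Real.sin u = Real.sin (2*(u/2)) by ring_nf, Real.sin_two_mul]
  rw [Complex.exp_mul_I, Complex.exp_mul_I, ← Complex.ofReal_cos, ← Complex.ofReal_sin,
    ← Complex.ofReal_cos, ← Complex.ofReal_sin, h1, h2, h3, h4]
  push_cast
  ring

lemma one_sub_exp_neg (u : ℝ) :
    (1 : ℂ) - Complex.exp (((-u : ℝ) : ℂ) * Complex.I)
      = ((2 * Real.sin (u/2) : ℝ) : ℂ) * Complex.exp ((((π - u)/2 : ℝ) : ℂ) * Complex.I) := by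
  have h1 : Real.cos ((π - u)/2) = Real.sin (u/2) := by
    rw [show (π - u)/2 = π/2 - u/2 by ring, Real.cos_pi_div_two_sub]
  have h2 : Real.sin ((π - u)/2) = Real.cos (u/2) := by
    rw [show (π - u)/2 = π/2 - u/2 by ring, Real.sin_pi_div_two_sub]
  have h3 : Real.cos (-u) = 1 - 2 * Real.sin (u/2)^2 := by
    rw [Real.cos_neg]
    have h5 : Real.cos u = 2 * Real.cos (u/2)^2 - 1 := by
      rw [← Real.cos_two_mul]; ring_nf
    nlinarith [Real.sin_sq_add_cos_sq (u/2)]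
  have h4 : Real.sin (-u) = -(2 * Real.sin (u/2) * Real.cos (u/2)) := by
    rw [Real.sin_neg, show Real.sin u = Real.sin (2*(u/2)) by ring_nf, Real.sin_two_mul]
  rw [Complex.exp_mul_I, Complex.exp_mul_I, ← Complex.ofReal_cos, ← Complex.ofReal_sin,
    ← Complex.ofReal_cos, ← Complex.ofReal_sin, h1, h2, h3, h4]
  push_cast
  ring

lemma exp_ofReal_mul_I (x : ℝ) :
    Complex.exp ((x : ℂ) * Complex.I) = ((Real.cos x : ℝ) : ℂ) + ((Real.sin x : ℝ) : ℂ) * Complex.I := by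
  rw [Complex.exp_mul_I, ← Complex.ofReal_cos, ← Complex.ofReal_sin]

lemma exp_ofReal_neg_mul_I (x : ℝ) :
    Complex.exp (-(x : ℂ) * Complex.I)
      = ((Real.cos x : ℝ) : ℂ) - ((Real.sin x : ℝ) : ℂ) * Complex.I := by
  rw [show -(x:ℂ) * Complex.I = ((-x : ℝ) : ℂ) * Complex.I by push_cast; ring,
    _root_.exp_ofReal_mul_I, Real.cos_neg, Real.sin_neg]
  push_cast; ring

lemma spec_eval (δ α p : ℝ) (hα0 : 0 < α) (hp0 : 0 < p) (hp1 : p < 1)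
    (u : ℝ) (hu0 : 0 < u) (huπ : u ≤ π) (lam : ℝ) :
    inmaSpec δ α p lam u (-u) =
      (1 / (2 * Real.pi)) *
        ( -((Real.exp (-(2 * (δ * (p ^ α + 1)) * myG α u)) : ℝ) : ℂ)
              * ((2 * Real.cos lam + 1 : ℝ) : ℂ)
          + 1
          + Complex.exp (((-(δ * (myQ α p + 1) * myG α u) : ℝ) : ℂ)
                + ((-(δ * (myQ α p - 1) * myS α u) : ℝ) : ℂ) * Complex.I)
              * Complex.exp (-(lam : ℂ) * Complex.I)
          + Complex.exp (((-(δ * (myQ α p + 1) * myG α u) : ℝ) : ℂ)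
                + ((δ * (myQ α p - 1) * myS α u : ℝ) : ℂ) * Complex.I)
              * Complex.exp ((lam : ℂ) * Complex.I) ) := by
  have hpi := Real.pi_pos
  set s : ℝ := 2 * Real.sin (u/2) with hs_def
  set φ : ℝ := (π - u)/2 with hφ_def
  have hs : 0 < s := by
    have : 0 < Real.sin (u/2) :=
      Real.sin_pos_of_pos_of_lt_pi (by linarith) (by linarith)
    simpa [hs_def] using by linarith
  have hφ0 : 0 ≤ φ := by simp only [hφ_def]; linarith
  have hφlt : φ < π := by simp only [hφ_def]; linarith
  have hmem1 : -φ ∈ Set.Ioc (-π) π := ⟨by linarith, by linarith⟩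
  have hmem2 : φ ∈ Set.Ioc (-π) π := ⟨by linarith, by linarith⟩
  have hsp : 0 < (1 - p) * s := mul_pos (by linarith) hs
  have hα : ((α : ℂ)) ≠ 0 := by exact_mod_cast hα0.ne'
  -- normalized basic identities
  have hee : Complex.exp (-(u : ℂ) * Complex.I) * Complex.exp ((u : ℂ) * Complex.I) = 1 := by
    rw [← Complex.exp_add, show -(u : ℂ) * Complex.I + (u : ℂ) * Complex.I = 0 by ring]
    exact Complex.exp_zero
  have hw : (1 : ℂ) - Complex.exp ((u : ℂ) * Complex.I)
      = ((s : ℝ) : ℂ) * Complex.exp (-(φ : ℂ) * Complex.I) := by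
    have h := one_sub_exp u
    rw [← hs_def, ← hφ_def, show ((-φ : ℝ) : ℂ) = -(φ:ℂ) by push_cast; ring] at h
    exact h
  have hwb : (1 : ℂ) - Complex.exp (-(u : ℂ) * Complex.I)
      = ((s : ℝ) : ℂ) * Complex.exp ((φ : ℂ) * Complex.I) := by
    have h := one_sub_exp_neg u
    rw [← hs_def, ← hφ_def, show ((-u : ℝ) : ℂ) = -(u:ℂ) by push_cast; ring] at h
    exact h
  have hfac3 : (1 : ℂ) - Complex.exp (-(u : ℂ) * Complex.I)
        * (1 - (p : ℂ) + (p : ℂ) * Complex.exp ((u : ℂ) * Complex.I))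
      = (((1 - p) * s : ℝ) : ℂ) * Complex.exp ((φ : ℂ) * Complex.I) := by
    push_cast
    linear_combination (-(p : ℂ)) * hee + ((1 : ℂ) - p) * hwb
  have hfac4 : (1 : ℂ) - Complex.exp ((u : ℂ) * Complex.I)
        * (1 - (p : ℂ) + (p : ℂ) * Complex.exp (-(u : ℂ) * Complex.I))
      = (((1 - p) * s : ℝ) : ℂ) * Complex.exp (-(φ : ℂ) * Complex.I) := by
    push_cast
    linear_combination (-(p : ℂ)) * hee + ((1 : ℂ) - p) * hw
  -- cpow computations
  have hc1 : (((s : ℝ) : ℂ) * Complex.exp (-(φ : ℂ) * Complex.I)) ^ (α : ℂ)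
      = ((s ^ α : ℝ) : ℂ) * Complex.exp (-((α * φ : ℝ) : ℂ) * Complex.I) := by
    have h := cpow_polar s (-φ) α hs hmem1
    rw [show ((-φ : ℝ) : ℂ) = -(φ:ℂ) by push_cast; ring,
      show ((α * -φ : ℝ) : ℂ) = -((α * φ : ℝ) : ℂ) by push_cast; ring] at h
    exact h
  have hc2 : (((s : ℝ) : ℂ) * Complex.exp ((φ : ℂ) * Complex.I)) ^ (α : ℂ)
      = ((s ^ α : ℝ) : ℂ) * Complex.exp (((α * φ : ℝ) : ℂ) * Complex.I) :=
    cpow_polar s φ α hs hmem2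
  have hc3 : ((((1 - p) * s : ℝ) : ℂ) * Complex.exp ((φ : ℂ) * Complex.I)) ^ (α : ℂ)
      = (((1 - p) ^ α * s ^ α : ℝ) : ℂ) * Complex.exp (((α * φ : ℝ) : ℂ) * Complex.I) := by
    rw [cpow_polar ((1 - p) * s) φ α hsp hmem2, Real.mul_rpow (by linarith) hs.le]
  have hc4 : ((((1 - p) * s : ℝ) : ℂ) * Complex.exp (-(φ : ℂ) * Complex.I)) ^ (α : ℂ)
      = (((1 - p) ^ α * s ^ α : ℝ) : ℂ) * Complex.exp (-((α * φ : ℝ) : ℂ) * Complex.I) := by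
    have h := cpow_polar ((1 - p) * s) (-φ) α hsp hmem1
    rw [show ((-φ : ℝ) : ℂ) = -(φ:ℂ) by push_cast; ring,
      show ((α * -φ : ℝ) : ℂ) = -((α * φ : ℝ) : ℂ) by push_cast; ring,
      Real.mul_rpow (by linarith) hs.le] at h
    exact h
  rw [inmaSpec]
  rw [show ((u + -u : ℝ) : ℂ) = 0 by push_cast; ring]
  rw [zero_mul, Complex.exp_zero, sub_self, Complex.zero_cpow hα, mul_zero, Complex.exp_zero]
  rw [show ((-u : ℝ) : ℂ) = -(u : ℂ) by push_cast; ring]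
  rw [hw, hwb, hfac3, hfac4, hc1, hc2, hc3, hc4]
  rw [_root_.exp_ofReal_mul_I (α * φ), exp_ofReal_neg_mul_I (α * φ)]
  simp only [myG, myS, myQ, ← hs_def, ← hφ_def]
  have hE1 : -(δ:ℂ) * (((p ^ α : ℝ):ℂ) + 1) *
        (((s ^ α : ℝ):ℂ) * (((Real.cos (α * φ) : ℝ):ℂ) - ((Real.sin (α * φ) : ℝ):ℂ) * Complex.I) +
          ((s ^ α : ℝ):ℂ) * (((Real.cos (α * φ) : ℝ):ℂ) + ((Real.sin (α * φ) : ℝ):ℂ) * Complex.I))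
      = ((-(2 * (δ * (p ^ α + 1)) * (s ^ α * Real.cos (α * φ))) : ℝ) : ℂ) := by
    push_cast; ring
  have hE3 : -(δ:ℂ) *
        (((p ^ α : ℝ):ℂ) * (((s ^ α : ℝ):ℂ) * (((Real.cos (α * φ) : ℝ):ℂ) + ((Real.sin (α * φ) : ℝ):ℂ) * Complex.I)) +
            (((1 - p) ^ α * s ^ α : ℝ):ℂ) * (((Real.cos (α * φ) : ℝ):ℂ) + ((Real.sin (α * φ) : ℝ):ℂ) * Complex.I) +
          ((s ^ α : ℝ):ℂ) * (((Real.cos (α * φ) : ℝ):ℂ) - ((Real.sin (α * φ) : ℝ):ℂ) * Complex.I))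
      = ((-(δ * (p ^ α + (1 - p) ^ α + 1) * (s ^ α * Real.cos (α * φ))) : ℝ) : ℂ)
        + ((-(δ * (p ^ α + (1 - p) ^ α - 1) * (s ^ α * Real.sin (α * φ))) : ℝ) : ℂ) * Complex.I := by
    push_cast; ring
  have hE4 : -(δ:ℂ) *
        (((p ^ α : ℝ):ℂ) * (((s ^ α : ℝ):ℂ) * (((Real.cos (α * φ) : ℝ):ℂ) - ((Real.sin (α * φ) : ℝ):ℂ) * Complex.I)) +
            (((1 - p) ^ α * s ^ α : ℝ):ℂ) * (((Real.cos (α * φ) : ℝ):ℂ) - ((Real.sin (α * φ) : ℝ):ℂ) * Complex.I) +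
          ((s ^ α : ℝ):ℂ) * (((Real.cos (α * φ) : ℝ):ℂ) + ((Real.sin (α * φ) : ℝ):ℂ) * Complex.I))
      = ((-(δ * (p ^ α + (1 - p) ^ α + 1) * (s ^ α * Real.cos (α * φ))) : ℝ) : ℂ)
        + ((δ * (p ^ α + (1 - p) ^ α - 1) * (s ^ α * Real.sin (α * φ)) : ℝ) : ℂ) * Complex.I := by
    push_cast; ring
  rw [hE1, hE3, hE4, Complex.ofReal_exp]

lemma expi_pi_div_two : Complex.exp (((π/2 : ℝ) : ℂ) * Complex.I) = Complex.I := by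
  rw [_root_.exp_ofReal_mul_I]; simp

lemma expi_neg_pi_div_two : Complex.exp (-((π/2 : ℝ) : ℂ) * Complex.I) = -Complex.I := by
  rw [exp_ofReal_neg_mul_I]; simp

lemma expi_neg_pi : Complex.exp (-((π : ℝ) : ℂ) * Complex.I) = -1 := by
  rw [show -((π:ℝ):ℂ) * Complex.I = -(((π:ℝ):ℂ) * Complex.I) by ring, Complex.exp_neg,
    Complex.exp_pi_mul_I]
  norm_num

lemma extract (δ δ' α α' p p' : ℝ)
    (hδ : 0 < δ) (hδ' : 0 < δ')
    (hα : α ∈ Set.Ioc (0 : ℝ) 1) (hα' : α' ∈ Set.Ioc (0 : ℝ) 1)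
    (hp : p ∈ Set.Ioo (0 : ℝ) 1) (hp' : p' ∈ Set.Ioo (0 : ℝ) 1)
    (h : ∀ lam u v : ℝ, inmaSpec δ α p lam u v = inmaSpec δ' α' p' lam u v)
    (u : ℝ) (hu0 : 0 < u) (huπ : u ≤ π) :
    δ * (p ^ α + 1) * myG α u = δ' * (p' ^ α' + 1) * myG α' u ∧
    δ * (myQ α p + 1) * myG α u = δ' * (myQ α' p' + 1) * myG α' u ∧
    ∃ n : ℤ, δ * (myQ α p - 1) * myS α u = δ' * (myQ α' p' - 1) * myS α' u + n * (2 * π) := by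
  have hπ : ((2 : ℂ) * (π : ℝ)) ≠ 0 := by
    have := Real.pi_ne_zero
    simp [this]
  have hne : (1 / (2 * ((π : ℝ) : ℂ))) ≠ 0 := by
    simp [Real.pi_ne_zero]
  have e0 := h 0 u (-u)
  have eπ := h π u (-u)
  have eh := h (π/2) u (-u)
  rw [spec_eval δ α p hα.1 hp.1 hp.2 u hu0 huπ _,
    spec_eval δ' α' p' hα'.1 hp'.1 hp'.2 u hu0 huπ _] at e0 eπ eh
  have e0' := mul_left_cancel₀ hne e0
  have eπ' := mul_left_cancel₀ hne eπ
  have eh' := mul_left_cancel₀ hne eh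
  rw [Real.cos_zero] at e0'
  rw [Real.cos_pi] at eπ'
  rw [Real.cos_pi_div_two] at eh'
  rw [show ((0:ℝ):ℂ) = 0 by norm_num, neg_zero, zero_mul, Complex.exp_zero] at e0'
  rw [Complex.exp_pi_mul_I, expi_neg_pi] at eπ'
  rw [expi_pi_div_two, expi_neg_pi_div_two] at eh'
  norm_num at e0' eπ' eh'
  have hA : Complex.exp (-(2 * ((δ:ℂ) * (((p ^ α : ℝ):ℂ) + 1)) * ((myG α u : ℝ):ℂ)))
      = Complex.exp (-(2 * ((δ':ℂ) * (((p' ^ α' : ℝ):ℂ) + 1)) * ((myG α' u : ℝ):ℂ))) := by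
    linear_combination (-(1:ℂ)/2) * e0' + (-(1:ℂ)/2) * eπ'
  have hT : Complex.exp (-((δ:ℂ) * (((myQ α p : ℝ):ℂ) + 1) * ((myG α u : ℝ):ℂ))
        + -((δ:ℂ) * (((myQ α p : ℝ):ℂ) - 1) * ((myS α u : ℝ):ℂ) * Complex.I))
      = Complex.exp (-((δ':ℂ) * (((myQ α' p' : ℝ):ℂ) + 1) * ((myG α' u : ℝ):ℂ))
        + -((δ':ℂ) * (((myQ α' p' : ℝ):ℂ) - 1) * ((myS α' u : ℝ):ℂ) * Complex.I)) := by
    set T1 : ℂ := Complex.exp (-((δ:ℂ) * (((myQ α p : ℝ):ℂ) + 1) * ((myG α u : ℝ):ℂ))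
        + -((δ:ℂ) * (((myQ α p : ℝ):ℂ) - 1) * ((myS α u : ℝ):ℂ) * Complex.I)) with hT1
    set T2 : ℂ := Complex.exp (-((δ:ℂ) * (((myQ α p : ℝ):ℂ) + 1) * ((myG α u : ℝ):ℂ))
        + (δ:ℂ) * (((myQ α p : ℝ):ℂ) - 1) * ((myS α u : ℝ):ℂ) * Complex.I) with hT2
    set T3 : ℂ := Complex.exp (-((δ':ℂ) * (((myQ α' p' : ℝ):ℂ) + 1) * ((myG α' u : ℝ):ℂ))
        + -((δ':ℂ) * (((myQ α' p' : ℝ):ℂ) - 1) * ((myS α' u : ℝ):ℂ) * Complex.I)) with hT3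
    set T4 : ℂ := Complex.exp (-((δ':ℂ) * (((myQ α' p' : ℝ):ℂ) + 1) * ((myG α' u : ℝ):ℂ))
        + (δ':ℂ) * (((myQ α' p' : ℝ):ℂ) - 1) * ((myS α' u : ℝ):ℂ) * Complex.I) with hT4
    linear_combination ((1:ℂ)/2) * e0' + (Complex.I/2) * eh' + ((3:ℂ)/2 + Complex.I/2) * hA
      + (((1:ℂ)/2) * (T1 - T2 - T3 + T4)) * Complex.I_sq
  have hA' : -(2 * (δ * (p ^ α + 1)) * myG α u) = -(2 * (δ' * (p' ^ α' + 1)) * myG α' u) := by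
    have h2 : Complex.exp (((-(2 * (δ * (p ^ α + 1)) * myG α u) : ℝ) : ℂ))
        = Complex.exp (((-(2 * (δ' * (p' ^ α' + 1)) * myG α' u) : ℝ) : ℂ)) := by
      rw [show ((-(2 * (δ * (p ^ α + 1)) * myG α u) : ℝ) : ℂ)
          = -(2 * ((δ:ℂ) * (((p ^ α : ℝ):ℂ) + 1)) * ((myG α u : ℝ):ℂ)) by push_cast; ring,
        show ((-(2 * (δ' * (p' ^ α' + 1)) * myG α' u) : ℝ) : ℂ)
          = -(2 * ((δ':ℂ) * (((p' ^ α' : ℝ):ℂ) + 1)) * ((myG α' u : ℝ):ℂ)) by push_cast; ring]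
      exact hA
    rw [← Complex.ofReal_exp, ← Complex.ofReal_exp] at h2
    exact Real.exp_injective (by exact_mod_cast h2)
  obtain ⟨n, hn⟩ := Complex.exp_eq_exp_iff_exists_int.mp hT
  rw [Complex.ext_iff] at hn
  obtain ⟨h1, h2⟩ := hn
  simp [Complex.add_re, Complex.add_im, Complex.sub_re, Complex.sub_im,
    Complex.mul_re, Complex.mul_im, Complex.I_re, Complex.I_im,
    Complex.ofReal_re, Complex.ofReal_im] at h1 h2
  refine ⟨by linarith, by linarith, ⟨-n, by push_cast; linarith⟩⟩

lemma tendsto_rpow_sin (β : ℝ) (hβ : 0 < β) :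
    Filter.Tendsto (fun u : ℝ => (2 * Real.sin (u/2)) ^ β) (nhdsWithin 0 (Set.Ioi 0)) (nhds 0) := by
  have h1 : Filter.Tendsto (fun u : ℝ => 2 * Real.sin (u/2)) (nhds 0) (nhds 0) := by
    have hc : Continuous (fun u : ℝ => 2 * Real.sin (u/2)) := by fun_prop
    have := hc.tendsto 0
    simpa using this
  have h2 : ContinuousAt (fun x : ℝ => x ^ β) 0 :=
    Real.continuousAt_rpow_const 0 β (Or.inr hβ.le)
  have h3 : Filter.Tendsto (fun x : ℝ => x ^ β) (nhds 0) (nhds 0) := by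
    have := h2.tendsto
    rwa [Real.zero_rpow hβ.ne'] at this
  exact (h3.comp h1).mono_left nhdsWithin_le_nhds

lemma alpha_lt_false (c c' α α' : ℝ) (hc : 0 < c) (hc' : 0 < c')
    (hα : α ∈ Set.Ioc (0:ℝ) 1) (hα' : α' ∈ Set.Ioc (0:ℝ) 1)
    (hG : ∀ u : ℝ, 0 < u → u ≤ π → c * myG α u = c' * myG α' u)
    (hlt : α < α') : False := by
  have hpi := Real.pi_pos
  have hkey : ∀ u ∈ Set.Ioo (0:ℝ) π,
      c * Real.cos (α * ((π - u)/2))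
        = c' * (2 * Real.sin (u/2)) ^ (α' - α) * Real.cos (α' * ((π - u)/2)) := by
    intro u hu
    have hm : 0 < 2 * Real.sin (u/2) := by
      have : 0 < Real.sin (u/2) :=
        Real.sin_pos_of_pos_of_lt_pi (by linarith [hu.1]) (by linarith [hu.2])
      linarith
    have hG' := hG u hu.1 hu.2.le
    simp only [myG] at hG'
    have hsplit : (2 * Real.sin (u/2)) ^ α' = (2 * Real.sin (u/2)) ^ α * (2 * Real.sin (u/2)) ^ (α' - α) := by
      rw [← Real.rpow_add hm]; ring_nf
    rw [hsplit] at hG'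
    have hmne : (2 * Real.sin (u/2)) ^ α ≠ 0 := (Real.rpow_pos_of_pos hm α).ne'
    apply mul_left_cancel₀ hmne
    calc (2 * Real.sin (u/2)) ^ α * (c * Real.cos (α * ((π - u)/2)))
        = c * ((2 * Real.sin (u/2)) ^ α * Real.cos (α * ((π - u)/2))) := by ring
      _ = c' * ((2 * Real.sin (u/2)) ^ α * (2 * Real.sin (u/2)) ^ (α' - α) * Real.cos (α' * ((π - u)/2))) := hG'
      _ = (2 * Real.sin (u/2)) ^ α * (c' * (2 * Real.sin (u/2)) ^ (α' - α) * Real.cos (α' * ((π - u)/2))) := by ring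
  have h1 : Filter.Tendsto (fun u : ℝ => c * Real.cos (α * ((π - u)/2)))
      (nhdsWithin 0 (Set.Ioi 0)) (nhds (c * Real.cos (α * (π/2)))) := by
    have hc1 : Continuous (fun u : ℝ => c * Real.cos (α * ((π - u)/2))) := by fun_prop
    have := (hc1.tendsto 0).mono_left (nhdsWithin_le_nhds (s := Set.Ioi (0:ℝ)))
    simpa using this
  have h2 : Filter.Tendsto (fun u : ℝ => c' * (2 * Real.sin (u/2)) ^ (α' - α) * Real.cos (α' * ((π - u)/2)))
      (nhdsWithin 0 (Set.Ioi 0)) (nhds 0) := by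
    have hr := tendsto_rpow_sin (α' - α) (by linarith)
    have hc2 : Continuous (fun u : ℝ => c' * Real.cos (α' * ((π - u)/2))) := by fun_prop
    have h2' : Filter.Tendsto (fun u : ℝ => c' * Real.cos (α' * ((π - u)/2)))
        (nhdsWithin 0 (Set.Ioi 0)) (nhds (c' * Real.cos (α' * (π/2)))) := by
      have := (hc2.tendsto 0).mono_left (nhdsWithin_le_nhds (s := Set.Ioi (0:ℝ)))
      simpa using this
    have := hr.mul h2'
    rw [zero_mul] at this
    apply this.congr
    intro u; ring
  have heq : (fun u : ℝ => c * Real.cos (α * ((π - u)/2)))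
      =ᶠ[nhdsWithin 0 (Set.Ioi 0)]
      (fun u : ℝ => c' * (2 * Real.sin (u/2)) ^ (α' - α) * Real.cos (α' * ((π - u)/2))) := by
    filter_upwards [Ioo_mem_nhdsGT_of_mem (show (0:ℝ) ∈ Set.Ico (0:ℝ) π from ⟨le_refl _, hpi⟩)]
      with u hu
    exact hkey u hu
  have hzero : c * Real.cos (α * (π/2)) = 0 :=
    tendsto_nhds_unique (h1.congr' heq) h2
  have hcos : 0 < Real.cos (α * (π/2)) := by
    apply Real.cos_pos_of_mem_Ioo
    constructor
    · nlinarith [hα.1, hpi]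
    · nlinarith [hα.1, hα.2, hα'.2, hpi]
  nlinarith

lemma myS_pos (α u : ℝ) (hα : α ∈ Set.Ioc (0:ℝ) 1) (hu : u ∈ Set.Ioo (0:ℝ) π) :
    0 < myS α u := by
  have hpi := Real.pi_pos
  have hm : 0 < 2 * Real.sin (u/2) := by
    have : 0 < Real.sin (u/2) :=
      Real.sin_pos_of_pos_of_lt_pi (by linarith [hu.1]) (by linarith [hu.2])
    linarith
  have hφ : 0 < (π - u)/2 := by linarith [hu.2]
  have hs : 0 < Real.sin (α * ((π - u)/2)) := by
    apply Real.sin_pos_of_pos_of_lt_pi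
    · exact mul_pos hα.1 hφ
    · nlinarith [hα.2, hu.1]
  exact mul_pos (Real.rpow_pos_of_pos hm α) hs

lemma K_eq_zero (K α : ℝ) (hα : α ∈ Set.Ioc (0:ℝ) 1)
    (hK : ∀ u : ℝ, 0 < u → u < π → ∃ n : ℤ, K * myS α u = n * (2 * π)) : K = 0 := by
  have hpi := Real.pi_pos
  by_contra hK0
  have hS : Filter.Tendsto (fun u : ℝ => myS α u) (nhdsWithin 0 (Set.Ioi 0)) (nhds 0) := by
    have hr := tendsto_rpow_sin α hα.1
    have hc2 : Continuous (fun u : ℝ => Real.sin (α * ((π - u)/2))) := by fun_prop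
    have h2' : Filter.Tendsto (fun u : ℝ => Real.sin (α * ((π - u)/2)))
        (nhdsWithin 0 (Set.Ioi 0)) (nhds (Real.sin (α * (π/2)))) := by
      have := (hc2.tendsto 0).mono_left (nhdsWithin_le_nhds (s := Set.Ioi (0:ℝ)))
      simpa using this
    have := hr.mul h2'
    rw [zero_mul] at this
    exact this.congr (fun u => rfl)
  have habs : Filter.Tendsto (fun u : ℝ => |myS α u|) (nhdsWithin 0 (Set.Ioi 0)) (nhds 0) := by
    have := hS.abs; simpa using this
  have hev : ∀ᶠ u in nhdsWithin (0:ℝ) (Set.Ioi 0), |myS α u| < 2 * π / |K| := by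
    apply habs.eventually_lt_const
    positivity
  have hmem : ∀ᶠ u in nhdsWithin (0:ℝ) (Set.Ioi 0), u ∈ Set.Ioo (0:ℝ) π :=
    Ioo_mem_nhdsGT_of_mem (show (0:ℝ) ∈ Set.Ico (0:ℝ) π from ⟨le_refl _, hpi⟩)
  obtain ⟨u, h1, h2⟩ := (hev.and hmem).exists
  obtain ⟨n, hn⟩ := hK u h2.1 h2.2
  have hSu : 0 < myS α u := myS_pos α u hα h2
  have hn0 : n ≠ 0 := by
    intro h0
    rw [h0] at hn
    simp at hn
    rcases hn with h | h
    · exact hK0 h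
    · linarith
  have h1' : |K| * |myS α u| < 2 * π := by
    have hKpos : 0 < |K| := abs_pos.mpr hK0
    calc |K| * |myS α u| < |K| * (2 * π / |K|) := by
          exact mul_lt_mul_of_pos_left h1 hKpos
      _ = 2 * π := by field_simp
  have h2' : 2 * π ≤ |K| * |myS α u| := by
    rw [← abs_mul, hn, abs_mul]
    have : (1:ℝ) ≤ |(n:ℝ)| := by
      rw [← Int.cast_abs]
      exact_mod_cast Int.one_le_abs hn0
    calc (2:ℝ) * π = 1 * |2 * π| := by rw [abs_of_pos (by linarith)]; ring
      _ ≤ |(n:ℝ)| * |2 * π| := by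
          apply mul_le_mul_of_nonneg_right this (abs_nonneg _)
  linarith

lemma myG_pi (α : ℝ) : myG α π = 2 ^ α := by
  simp [myG, Real.sin_pi_div_two]

end InmaAux

/-- Identifiability of the integer-valued MA(1) model with discrete stable
innovations from its generalized spectrum. -/
theorem inma_identifiable (δ δ' α α' p p' : ℝ)
    (hδ : 0 < δ) (hδ' : 0 < δ')
    (hα : α ∈ Set.Ioc (0 : ℝ) 1) (hα' : α' ∈ Set.Ioc (0 : ℝ) 1)
    (hp : p ∈ Set.Ioo (0 : ℝ) 1) (hp' : p' ∈ Set.Ioo (0 : ℝ) 1)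
    (h : ∀ lam u v : ℝ, inmaSpec δ α p lam u v = inmaSpec δ' α' p' lam u v) :
    δ = δ' ∧ α = α' ∧ p = p' := by

  have hpi := Real.pi_pos
  have hext := extract δ δ' α α' p p' hδ hδ' hα hα' hp hp' h
  have hc : 0 < δ * (p ^ α + 1) := by
    have := Real.rpow_pos_of_pos hp.1 α
    nlinarith
  have hc' : 0 < δ' * (p' ^ α' + 1) := by
    have := Real.rpow_pos_of_pos hp'.1 α'
    nlinarith
  -- α = α'
  have hαα : α = α' := by
    by_contra hne
    rcases lt_or_gt_of_ne hne with hlt | hgt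
    · exact alpha_lt_false _ _ _ _ hc hc' hα hα'
        (fun u hu0 huπ => (hext u hu0 huπ).1) hlt
    · exact alpha_lt_false _ _ _ _ hc' hc hα' hα
        (fun u hu0 huπ => ((hext u hu0 huπ).1).symm) hgt
  subst hαα
  -- evaluate at u = π
  have hπmem : (0:ℝ) < π ∧ π ≤ π := ⟨hpi, le_refl _⟩
  have hP1 := (hext π hpi (le_refl _)).1
  have hP2 := (hext π hpi (le_refl _)).2.1
  rw [myG_pi] at hP1 hP2
  have h2α : (0:ℝ) < 2 ^ α := Real.rpow_pos_of_pos (by norm_num) α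
  have hE1 : δ * (p ^ α + 1) = δ' * (p' ^ α + 1) :=
    mul_right_cancel₀ h2α.ne' hP1
  have hE2 : δ * (myQ α p + 1) = δ' * (myQ α p' + 1) :=
    mul_right_cancel₀ h2α.ne' hP2
  -- K = 0
  have hE3 : δ * (myQ α p - 1) = δ' * (myQ α p' - 1) := by
    have hK := K_eq_zero (δ * (myQ α p - 1) - δ' * (myQ α p' - 1)) α hα ?_
    · linarith
    · intro u hu0 huπ
      obtain ⟨n, hn⟩ := (hext u hu0 huπ.le).2.2
      exact ⟨n, by rw [sub_mul]; push_cast; linarith⟩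
  have hδδ : δ = δ' := by
    simp only [myQ] at hE2 hE3
    linarith
  subst hδδ
  refine ⟨rfl, rfl, ?_⟩
  have hpp : p ^ α = p' ^ α := by
    have := hδ
    nlinarith [hE1]
  rcases lt_trichotomy p p' with hlt | heq | hgt
  · exfalso
    have := Real.rpow_lt_rpow hp.1.le hlt hα.1
    linarith [hpp]
  · exact heq
  · exfalso
    have := Real.rpow_lt_rpow hp'.1.le hgt hα.1
    linarith [hpp]
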